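/- For every n ≥ 4: in any ortholattice, if the nOA law holds for all elements, then the (n−1)OA law holds for all elements. -/

import Mathlib

/-- An ortholattice: a bounded lattice with an orthocomplementation. -/
class Ortholattice (α : Type*) extends Lattice α, BoundedOrder α, Compl α where
  compl_compl : ∀ a : α, aᶜᶜ = a
  compl_le_compl : ∀ a b : α, a ≤ b → bᶜ ≤ aᶜ
  inf_compl_self : ∀ a : α, a ⊓ aᶜ = ⊥
  sup_compl_self : ∀ a : α, a ⊔ aᶜ = ⊤

/-- The Sasaki hook `a → b := a' ⊔ (a ⊓ b)`. -/
def sasaki {α : Type*} [Ortholattice α] (a b : α) : α := aᶜ ⊔ (a ⊓ b)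

/-- The generalized orthoarguesian equivalence `a ≡ₙ b` where `n = k + 3`:
`a3` is the third variable and `p` lists the parameters `a₄, …, aₙ`.
For `k = 0` it is `((a→a₃)⊓(b→a₃)) ⊔ ((a'→a₃)⊓(b'→a₃))`, and
`a ≡ₖ₊₁ b = (a ≡ₖ b) ⊔ ((a ≡ₖ aₖ₊₁) ⊓ (b ≡ₖ aₖ₊₁))`. -/
def oaeq {α : Type*} [Ortholattice α] (a3 : α) :
    (k : ℕ) → (Fin k → α) → α → α → α
  | 0, _, a, b => (sasaki a a3 ⊓ sasaki b a3) ⊔ (sasaki aᶜ a3 ⊓ sasaki bᶜ a3)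
  | k + 1, p, a, b =>
      oaeq a3 k (fun i => p i.castSucc) a b ⊔
        (oaeq a3 k (fun i => p i.castSucc) a (p (Fin.last k)) ⊓
          oaeq a3 k (fun i => p i.castSucc) b (p (Fin.last k)))

/-- The nOA law in an ortholattice `α`:
`(a₁→a₃) ⊓ (a₁ ≡ₙ a₂) ≤ a₂→a₃` for all `a₁, …, aₙ`. -/
def OAlawN (α : Type*) [Ortholattice α] (n : ℕ) : Prop :=
  ∀ (hn : 3 ≤ n) (a : Fin n → α),
    sasaki (a ⟨0, by omega⟩) (a ⟨2, by omega⟩) ⊓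
      oaeq (a ⟨2, by omega⟩) (n - 3) (fun j => a ⟨j.1 + 3, by have := j.2; omega⟩)
        (a ⟨0, by omega⟩) (a ⟨1, by omega⟩) ≤
    sasaki (a ⟨1, by omega⟩) (a ⟨2, by omega⟩)

lemma oaeq_congr {α : Type*} [Ortholattice α] (a3 : α) {k k' : ℕ} (h : k = k')
    (p : Fin k → α) (p' : Fin k' → α) (hp : ∀ i : Fin k, p i = p' (Fin.cast h i))
    (x y : α) : oaeq a3 k p x y = oaeq a3 k' p' x y := by
  subst h
  have : p = p' := funext fun i => hp i
  rw [this]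

/-- For every `n ≥ 4`, in any ortholattice the nOA law implies the (n-1)OA law. -/
theorem stmt_3 {α : Type*} [Ortholattice α] :
    ∀ n : ℕ, 4 ≤ n → OAlawN α n → OAlawN α (n - 1) := by
  intro n hn hOA
  obtain ⟨m, rfl⟩ : ∃ m, n = m + 1 := ⟨n - 1, by omega⟩
  simp only [Nat.add_sub_cancel]
  intro hm3 a
  set b : Fin (m + 1) → α := fun i => a ⟨min i.1 (m - 1), by omega⟩ with hb
  have key := hOA (by omega) b
  have h : m + 1 - 3 = (m - 3) + 1 := by omega
  have hb0 : b ⟨0, by omega⟩ = a ⟨0, by omega⟩ := by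
    simp only [hb]; exact congrArg a (Fin.ext (show min 0 (m - 1) = 0 by omega))
  have hb1 : b ⟨1, by omega⟩ = a ⟨1, by omega⟩ := by
    simp only [hb]; exact congrArg a (Fin.ext (show min 1 (m - 1) = 1 by omega))
  have hb2 : b ⟨2, by omega⟩ = a ⟨2, by omega⟩ := by
    simp only [hb]; exact congrArg a (Fin.ext (show min 2 (m - 1) = 2 by omega))
  rw [← hb0, ← hb1, ← hb2]
  refine le_trans (inf_le_inf_left _ ?_) key
  rw [oaeq_congr (b ⟨2, by omega⟩) h
    (fun j : Fin (m + 1 - 3) => b ⟨j.1 + 3, by have := j.2; omega⟩)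
    (fun j : Fin (m - 3 + 1) => b ⟨j.1 + 3, by have := j.2; omega⟩)
    (fun i => rfl) (b ⟨0, by omega⟩) (b ⟨1, by omega⟩)]
  simp only [oaeq]
  have hp : (fun i : Fin (m - 3) =>
      (fun j : Fin (m - 3 + 1) => b ⟨j.1 + 3, by have := j.2; omega⟩) i.castSucc)
      = fun j : Fin (m - 3) => a ⟨j.1 + 3, by have := j.2; omega⟩ := by
    funext i
    simp only [hb, Fin.coe_castSucc]
    exact congrArg a (Fin.ext (show min (i.1 + 3) (m - 1) = i.1 + 3 by
      have := i.2; omega))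
  rw [hp]
  exact le_sup_left
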